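/- Let R be a commutative ring, n ≥ 2 an even integer, and f, g ∈ R[x] of degree < n. For every integer k with 0 ≤ k ≤ n/2 − 2, the k-th coefficient of the product of f and g in R[x]/(x^n − x^{n/2} + 1) is h_k = a_k − a_{k+n} − a_{k+3n/2}. -/

import Mathlib

open Polynomial

/-- `a_d = Σ_{i+j=d, 0 ≤ i,j ≤ n−1} f_i g_j`. -/
def convCoeff {R : Type*} [CommRing R] (n : ℕ) (f g : Polynomial R) (d : ℕ) : R :=
  ∑ i ∈ Finset.range n, ∑ j ∈ Finset.range n,
    if i + j = d then f.coeff i * g.coeff j else 0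

lemma convCoeff_eq {R : Type*} [CommRing R] (n : ℕ) (f g : Polynomial R)
    (hf : f.degree < n) (hg : g.degree < n) (d : ℕ) :
    convCoeff n f g d = (f * g).coeff d := by
  have hfc : ∀ i, n ≤ i → f.coeff i = 0 := fun i hi =>
    f.coeff_eq_zero_of_degree_lt (hf.trans_le (by exact_mod_cast hi))
  have hgc : ∀ j, n ≤ j → g.coeff j = 0 := fun j hj =>
    g.coeff_eq_zero_of_degree_lt (hg.trans_le (by exact_mod_cast hj))
  set M := max n (d + 1) with hM
  have hnM : n ≤ M := le_max_left _ _
  have h1 : convCoeff n f g d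
      = ∑ i ∈ Finset.range M, ∑ j ∈ Finset.range M,
          if i + j = d then f.coeff i * g.coeff j else 0 := by
    unfold convCoeff
    rw [Finset.sum_subset (Finset.range_subset_range.2 hnM)]
    · refine Finset.sum_congr rfl fun i _ => ?_
      rw [Finset.sum_subset (Finset.range_subset_range.2 hnM)]
      intro j _ hj
      simp only [Finset.mem_range, not_lt] at hj
      rw [hgc j hj, mul_zero, ite_self]
    · intro i _ hi
      simp only [Finset.mem_range, not_lt] at hi
      rw [hfc i hi]
      simp
  rw [h1, coeff_mul, ← Finset.sum_product', ← Finset.sum_filter]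
  apply Finset.sum_congr
  · ext ⟨i, j⟩
    simp only [Finset.mem_filter, Finset.mem_product, Finset.mem_range,
      Finset.mem_antidiagonal, hM]
    rw [Finset.HasAntidiagonal.mem_antidiagonal]
    omega
  · intros; rfl

section ModLemmas

variable {R : Type*} [CommRing R] [Nontrivial R]

lemma modpoly_monic (n m : ℕ) (hm : 0 < m) (hmn : m < n) :
    ((X : Polynomial R) ^ n - X ^ m + 1).Monic := by
  have h : (X : Polynomial R) ^ n - X ^ m + 1 = X ^ n + (1 - X ^ m) := by ring
  rw [h]
  apply monic_X_pow_add
  refine lt_of_le_of_lt (degree_sub_le _ _) (max_lt ?_ ?_)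
  · exact lt_of_le_of_lt degree_one_le (by exact_mod_cast hm.trans hmn)
  · rw [degree_X_pow]; exact_mod_cast hmn

lemma modpoly_degree (n m : ℕ) (hm : 0 < m) (hmn : m < n) :
    ((X : Polynomial R) ^ n - X ^ m + 1).degree = (n : WithBot ℕ) := by
  have h : (X : Polynomial R) ^ n - X ^ m + 1 = X ^ n + (1 - X ^ m) := by ring
  rw [h, degree_add_eq_left_of_degree_lt, degree_X_pow]
  rw [degree_X_pow]
  refine lt_of_le_of_lt (degree_sub_le _ _) (max_lt ?_ ?_)
  · exact lt_of_le_of_lt degree_one_le (by exact_mod_cast hm.trans hmn)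
  · rw [degree_X_pow]; exact_mod_cast hmn

lemma xpow_mod_low (n m d : ℕ) (hm : 0 < m) (hmn : m < n) (hd : d < n) :
    (X : Polynomial R) ^ d %ₘ (X ^ n - X ^ m + 1) = X ^ d := by
  rw [modByMonic_eq_self_iff (modpoly_monic n m hm hmn), modpoly_degree n m hm hmn,
    degree_X_pow]
  exact_mod_cast hd

lemma xpow_mod_mid (n m d : ℕ) (hm : 0 < m) (hnm : n = m + m) (hd1 : n ≤ d)
    (hd2 : d < n + m) :
    (X : Polynomial R) ^ d %ₘ (X ^ n - X ^ m + 1) = X ^ (d - m) - X ^ (d - n) := by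
  have hmn : m < n := by omega
  refine (div_modByMonic_unique (X ^ (d - n)) _ (modpoly_monic n m hm hmn) ⟨?_, ?_⟩).2
  · have e1 : (X : Polynomial R) ^ n * X ^ (d - n) = X ^ d := by
      rw [← pow_add]; congr 1; omega
    have e2 : (X : Polynomial R) ^ m * X ^ (d - n) = X ^ (d - m) := by
      rw [← pow_add]; congr 1; omega
    rw [add_mul, sub_mul, one_mul, e1, e2]
    ring
  · rw [modpoly_degree n m hm hmn]
    refine lt_of_le_of_lt (degree_sub_le _ _) (max_lt ?_ ?_)
    · rw [degree_X_pow]; exact_mod_cast (by omega : d - m < n)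
    · rw [degree_X_pow]; exact_mod_cast (by omega : d - n < n)

lemma xpow_mod_high (n m d : ℕ) (hm : 0 < m) (hnm : n = m + m) (hd1 : n + m ≤ d)
    (hd2 : d < 2 * n) :
    (X : Polynomial R) ^ d %ₘ (X ^ n - X ^ m + 1) = -(X ^ (d - n - m)) := by
  have hmn : m < n := by omega
  refine (div_modByMonic_unique (X ^ (d - n) + X ^ (d - n - m)) _
    (modpoly_monic n m hm hmn) ⟨?_, ?_⟩).2
  · have e1 : (X : Polynomial R) ^ n * X ^ (d - n) = X ^ d := by
      rw [← pow_add]; congr 1; omega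
    have e2 : (X : Polynomial R) ^ n * X ^ (d - n - m) = X ^ (d - m) := by
      rw [← pow_add]; congr 1; omega
    have e3 : (X : Polynomial R) ^ m * X ^ (d - n) = X ^ (d - m) := by
      rw [← pow_add]; congr 1; omega
    have e4 : (X : Polynomial R) ^ m * X ^ (d - n - m) = X ^ (d - n) := by
      rw [← pow_add]; congr 1; omega
    rw [add_mul, sub_mul, one_mul, mul_add, mul_add, e1, e2, e3, e4]
    ring
  · rw [modpoly_degree n m hm hmn, degree_neg, degree_X_pow]
    exact_mod_cast (by omega : d - n - m < n)

end ModLemmas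

/-- For `0 ≤ k ≤ n/2 − 2`, the `k`-th coefficient of the product of `f` and `g` in
`R[x]/(xⁿ − x^{n/2} + 1)` is `h_k = a_k − a_{k+n} − a_{k+3n/2}`. -/
theorem coeff_mul_mod_low {R : Type*} [CommRing R] (n : ℕ) (hn : 2 ≤ n) (hne : Even n)
    (f g : Polynomial R) (hf : f.degree < n) (hg : g.degree < n)
    (k : ℕ) (hk : k ≤ n / 2 - 2) :
    ((f * g) %ₘ ((X : Polynomial R) ^ n - X ^ (n / 2) + 1)).coeff k
      = convCoeff n f g k - convCoeff n f g (k + n) - convCoeff n f g (k + n + n / 2) := by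
  nontriviality R
  obtain ⟨m, hnm⟩ := hne
  have hm2 : n / 2 = m := by omega
  have hm : 0 < m := by omega
  rw [hm2] at hk ⊢
  have hkm : k < m := by omega
  -- f*g has small degree
  have hnf : f.natDegree < n := by
    rcases eq_or_ne f 0 with rfl | h
    · simp; omega
    · exact (natDegree_lt_iff_degree_lt h).2 (by exact_mod_cast hf)
  have hng : g.natDegree < n := by
    rcases eq_or_ne g 0 with rfl | h
    · simp; omega
    · exact (natDegree_lt_iff_degree_lt h).2 (by exact_mod_cast hg)
  have hfg : (f * g).natDegree < 2 * n :=
    lt_of_le_of_lt natDegree_mul_le (by omega)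
  set p : Polynomial R := X ^ n - X ^ m + 1 with hp
  have key : ((f * g) %ₘ p).coeff k
      = ∑ d ∈ Finset.range (2 * n), (f * g).coeff d * ((X ^ d %ₘ p).coeff k) := by
    conv_lhs => rw [(f * g).as_sum_range' (2 * n) hfg]
    have hsum : (∑ d ∈ Finset.range (2 * n), (monomial d) ((f * g).coeff d)) %ₘ p
        = ∑ d ∈ Finset.range (2 * n), ((monomial d) ((f * g).coeff d)) %ₘ p :=
      map_sum (modByMonicHom p) _ _
    rw [hsum, finset_sum_coeff]
    refine Finset.sum_congr rfl fun d _ => ?_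
    rw [← C_mul_X_pow_eq_monomial, ← smul_eq_C_mul, smul_modByMonic,
      coeff_smul, smul_eq_mul]
  rw [key]
  have hterm : ∀ d ∈ Finset.range (2 * n),
      (f * g).coeff d * ((X ^ d %ₘ p).coeff k)
        = (if k = d then (f * g).coeff d else 0)
          - (if k + n = d then (f * g).coeff d else 0)
          - (if k + n + m = d then (f * g).coeff d else 0) := by
    intro d hd
    simp only [Finset.mem_range] at hd
    rcases lt_or_ge d n with h1 | h1
    · rw [xpow_mod_low n m d hm (by omega) h1, coeff_X_pow]
      split_ifs <;> first | (exfalso; omega) | ring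
    · rcases lt_or_ge d (n + m) with h2 | h2
      · rw [xpow_mod_mid n m d hm hnm h1 h2, coeff_sub, coeff_X_pow, coeff_X_pow]
        split_ifs <;> first | (exfalso; omega) | ring
      · rw [xpow_mod_high n m d hm hnm h2 hd, coeff_neg, coeff_X_pow]
        split_ifs <;> first | (exfalso; omega) | ring
  rw [Finset.sum_congr rfl hterm]
  rw [Finset.sum_sub_distrib, Finset.sum_sub_distrib,
    Finset.sum_ite_eq (Finset.range (2 * n)) k, Finset.sum_ite_eq (Finset.range (2 * n)) (k + n),
    Finset.sum_ite_eq (Finset.range (2 * n)) (k + n + m),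
    if_pos (Finset.mem_range.2 (by omega)), if_pos (Finset.mem_range.2 (by omega)),
    if_pos (Finset.mem_range.2 (by omega)),
    convCoeff_eq n f g hf hg, convCoeff_eq n f g hf hg, convCoeff_eq n f g hf hg]
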